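/- Let K be a field, T = K[x_0,...,x_n], J a strongly stable ideal generated in degree m, F a J-marked set and I = (F). If F is a J-marked basis, then for all t ≥ m the set F^{(t)} is a K-basis of I_t. -/
import Mathlib


open MvPolynomial

noncomputable section

/-- The total degree of an exponent vector. -/
def degOf {N : ℕ} (α : Fin N →₀ ℕ) : ℕ := α.sum fun _ e => e

/-- The degree `t` homogeneous component of a homogeneous ideal, as a `K`-subspace. -/
def degPiece {K : Type*} [Field K] {N : ℕ} (I : Ideal (MvPolynomial (Fin N) K)) (t : ℕ) :
    Submodule K (MvPolynomial (Fin N) K) :=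
  (Submodule.restrictScalars K
      (I : Submodule (MvPolynomial (Fin N) K) (MvPolynomial (Fin N) K)))
    ⊓ homogeneousSubmodule (Fin N) K t

/-- The Hilbert function of the quotient by a homogeneous ideal:
`dim_K (P/I)_t = dim_K P_t - dim_K I_t`. -/
def hilbF {K : Type*} [Field K] {N : ℕ} (I : Ideal (MvPolynomial (Fin N) K)) (t : ℕ) : ℕ :=
  Module.finrank K (homogeneousSubmodule (Fin N) K t) - Module.finrank K (degPiece I t)

/-- The ideal generated by the monomials with exponents in `S`. -/
def monIdeal (K : Type*) [Field K] {N : ℕ} (S : Set (Fin N →₀ ℕ)) :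
    Ideal (MvPolynomial (Fin N) K) :=
  Ideal.span ((fun a => (monomial a (1 : K))) '' S)

/-- A monomial ideal `J` is strongly stable: it is generated by monomials and for every
term `x^α ∈ J`, every `x_i ∣ x^α` and every `j > i`, also `(x_j/x_i)·x^α ∈ J`. -/
def SStable {K : Type*} [Field K] {N : ℕ} (J : Ideal (MvPolynomial (Fin N) K)) : Prop :=
  (∃ S : Set (Fin N →₀ ℕ), J = monIdeal K S) ∧
  ∀ α : Fin N →₀ ℕ, (monomial α (1 : K)) ∈ J → ∀ i j : Fin N, i < j → α i ≠ 0 →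
    (monomial (α - Finsupp.single i 1 + Finsupp.single j 1) (1 : K)) ∈ J

/-- A `B`-marked set: for each exponent `α ∈ B` (the monomial basis of `J = (B)`), a
homogeneous polynomial `f α = x^α - Σ c_{αγ} x^γ` with head term `x^α` (coefficient `1`) and
all other terms `x^γ` monomials of the same degree not belonging to `J`. -/
def IsMarkedSet {K : Type*} [Field K] {N : ℕ} (B : Finset (Fin N →₀ ℕ))
    (f : (Fin N →₀ ℕ) → MvPolynomial (Fin N) K) : Prop :=
  ∀ α ∈ B, (f α).IsHomogeneous (degOf α) ∧ (f α).coeff α = 1 ∧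
    ∀ β, β ≠ α → (f α).coeff β ≠ 0 →
      (monomial β (1 : K)) ∉ monIdeal K (B : Set (Fin N →₀ ℕ))

/-- The `K`-span of the monomials lying outside the monomial ideal `J = (B)`. -/
def compSpan (K : Type*) [Field K] {N : ℕ} (B : Finset (Fin N →₀ ℕ)) :
    Submodule K (MvPolynomial (Fin N) K) :=
  Submodule.span K
    { p | ∃ β : Fin N →₀ ℕ, (monomial β (1 : K)) ∉ monIdeal K (B : Set (Fin N →₀ ℕ)) ∧
      p = monomial β (1 : K) }

/-- A marked set `f` is a `J`-marked basis if the monomials outside `J = (B)` freely generate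
the quotient `T/(F)`, i.e. `T` is the direct sum (as `K`-vector space) of the ideal generated
by the marked polynomials and the span of the monomials outside `J`. -/
def IsMarkedBasis {K : Type*} [Field K] {N : ℕ} (B : Finset (Fin N →₀ ℕ))
    (f : (Fin N →₀ ℕ) → MvPolynomial (Fin N) K) : Prop :=
  IsMarkedSet B f ∧
  (Submodule.restrictScalars K
      ((Ideal.span (f '' (B : Set (Fin N →₀ ℕ)))) :
        Submodule (MvPolynomial (Fin N) K) (MvPolynomial (Fin N) K)))
    ⊓ compSpan K B = ⊥ ∧
  (Submodule.restrictScalars K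
      ((Ideal.span (f '' (B : Set (Fin N →₀ ℕ)))) :
        Submodule (MvPolynomial (Fin N) K) (MvPolynomial (Fin N) K)))
    ⊔ compSpan K B = ⊤

namespace FtsAux

variable {K : Type*} [Field K] {N : ℕ}

/-- The index-weight of an exponent vector. -/
def w {N : ℕ} (η : Fin N →₀ ℕ) : ℕ := ∑ i : Fin N, (i : ℕ) * η i

lemma degOf_eq {N : ℕ} (η : Fin N →₀ ℕ) : degOf η = ∑ i : Fin N, η i :=
  Finsupp.sum_fintype _ _ (fun _ => rfl)

lemma degOf_eq_degree {N : ℕ} (η : Fin N →₀ ℕ) : degOf η = η.degree := rfl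

lemma degOf_add {N : ℕ} (a b : Fin N →₀ ℕ) : degOf (a + b) = degOf a + degOf b := by
  simp [degOf_eq, Finset.sum_add_distrib]

lemma w_add {N : ℕ} (a b : Fin N →₀ ℕ) : w (a + b) = w a + w b := by
  simp [w, mul_add, Finset.sum_add_distrib]

lemma w_single {N : ℕ} (i : Fin N) : w (Finsupp.single i 1) = (i : ℕ) := by
  simp [w, Finsupp.single_apply, mul_ite]

lemma eq_of_le_of_degOf_eq {N : ℕ} {a b : Fin N →₀ ℕ} (h : a ≤ b) (hd : degOf a = degOf b) :
    a = b := by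
  rw [degOf_eq, degOf_eq] at hd
  ext i
  exact (Finset.sum_eq_sum_iff_of_le (fun j _ => Finsupp.le_def.mp h j)).mp hd i
    (Finset.mem_univ i)

lemma monomial_mem_monIdeal_iff {S : Set (Fin N →₀ ℕ)} {β : Fin N →₀ ℕ} :
    MvPolynomial.monomial β (1 : K) ∈ monIdeal K S ↔ ∃ s ∈ S, s ≤ β := by
  rw [monIdeal, MvPolynomial.mem_ideal_span_monomial_image]
  simp [MvPolynomial.support_monomial]

lemma lemW {N : ℕ} {δ η' α' η : Fin N →₀ ℕ} (hδ : δ = η' + α')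
    (hsep : ∀ i j, η' i ≠ 0 → α' j ≠ 0 → i ≤ j)
    (hle : η ≤ δ) (hdeg : degOf η = degOf η') :
    w η' ≤ w η ∧ (w η = w η' → η = η') := by
  classical
  rcases eq_or_ne η' 0 with h0 | h0
  · subst h0
    have hd0 : degOf η = 0 := by simpa [degOf] using hdeg
    have hη : η = 0 := by
      rw [degOf_eq] at hd0
      ext i
      exact (Finset.sum_eq_zero_iff.mp hd0) i (Finset.mem_univ i)
    subst hη; simp
  · have hsupp : η'.support.Nonempty := Finsupp.support_nonempty_iff.mpr h0
    set r := η'.support.max' hsupp with hrdef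
    have hrmem : r ∈ η'.support := Finset.max'_mem _ _
    have hηr : η' r ≠ 0 := Finsupp.mem_support_iff.mp hrmem
    have hlow : ∀ i : Fin N, i < r → η i ≤ η' i := by
      intro i hi
      have hα : α' i = 0 := by
        by_contra hc
        exact absurd (hsep r i hηr hc) (not_le.mpr hi)
      have h1 : η i ≤ (η' + α') i := Finsupp.le_def.mp (hδ ▸ hle) i
      rwa [Finsupp.add_apply, hα, add_zero] at h1
    have hhigh : ∀ i : Fin N, r < i → η' i = 0 := by
      intro i hi
      by_contra hc
      exact absurd (Finset.le_max' _ i (Finsupp.mem_support_iff.mpr hc)) (not_le.mpr hi)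
    set D : Fin N → ℤ := fun i => (η i : ℤ) - (η' i : ℤ) with hD
    have hsumD : ∑ i : Fin N, D i = 0 := by
      have h1 : (∑ i : Fin N, η i) = ∑ i : Fin N, η' i := by
        rw [← degOf_eq, ← degOf_eq]; exact hdeg
      have h2 : ∑ i : Fin N, D i
          = ((∑ i : Fin N, η i : ℕ) : ℤ) - ((∑ i : Fin N, η' i : ℕ) : ℤ) := by
        simp [hD, Finset.sum_sub_distrib]
      rw [h2, h1, sub_self]
    have hterm : ∀ i : Fin N, 0 ≤ (((i : ℕ) : ℤ) - ((r : ℕ) : ℤ)) * D i := by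
      intro i
      rcases lt_trichotomy i r with h | h | h
      · have h1 : ((i : ℕ) : ℤ) ≤ ((r : ℕ) : ℤ) := by exact_mod_cast le_of_lt h
        have h2 : ((η i : ℕ) : ℤ) ≤ ((η' i : ℕ) : ℤ) := by exact_mod_cast hlow i h
        have := mul_nonneg (sub_nonneg.mpr h1) (sub_nonneg.mpr h2)
        simp only [hD]
        nlinarith [this]
      · subst h; simp
      · apply mul_nonneg
        · have : (i : ℕ) ≥ (r : ℕ) := le_of_lt h
          simp only [sub_nonneg]
          exact_mod_cast this
        · simp only [hD, hhigh i h, sub_nonneg, Nat.cast_zero]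
          positivity
    have hwz : ∀ ξ : Fin N →₀ ℕ, (w ξ : ℤ) = ∑ i : Fin N, ((i : ℕ) : ℤ) * (ξ i : ℤ) := by
      intro ξ; simp [w]
    have hE : ∑ i : Fin N, (((i : ℕ) : ℤ) - ((r : ℕ) : ℤ)) * D i = (w η : ℤ) - (w η' : ℤ) := by
      have h1 : ∀ i : Fin N, (((i : ℕ) : ℤ) - ((r : ℕ) : ℤ)) * D i
          = ((i : ℕ) : ℤ) * (η i : ℤ) - ((i : ℕ) : ℤ) * (η' i : ℤ)
            - ((r : ℕ) : ℤ) * D i := by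
        intro i; simp only [hD]; ring
      rw [Finset.sum_congr rfl fun i _ => h1 i]
      rw [Finset.sum_sub_distrib, Finset.sum_sub_distrib, ← Finset.mul_sum, hsumD,
        hwz, hwz]
      ring
    have hmain : (w η' : ℤ) ≤ (w η : ℤ) := by
      have := Finset.sum_nonneg (s := Finset.univ) (fun i _ => hterm i)
      rw [hE] at this
      linarith
    refine ⟨by exact_mod_cast hmain, fun heq => ?_⟩
    have hE0 : ∑ i : Fin N, (((i : ℕ) : ℤ) - ((r : ℕ) : ℤ)) * D i = 0 := by
      rw [hE, heq]; ring
    have hterm0 := (Finset.sum_eq_zero_iff_of_nonneg (fun i _ => hterm i)).mp hE0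
    have hDoff : ∀ i : Fin N, i ≠ r → D i = 0 := by
      intro i hi
      have := hterm0 i (Finset.mem_univ i)
      rcases mul_eq_zero.mp this with h | h
      · exfalso
        apply hi
        have : ((i : ℕ) : ℤ) = ((r : ℕ) : ℤ) := by linarith
        exact Fin.ext (by exact_mod_cast this)
      · exact h
    have hDr : D r = 0 := by
      have := Finset.sum_eq_single_of_mem r (Finset.mem_univ r)
        (fun i _ hi => hDoff i hi)
      rw [this] at hsumD
      exact hsumD
    ext i
    have : D i = 0 := by
      rcases eq_or_ne i r with rfl | h
      · exact hDr
      · exact hDoff i h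
    simp only [hD, sub_eq_zero] at this
    exact_mod_cast this

lemma exists_sep (K : Type*) [Field K] {N m : ℕ} (B : Finset (Fin N →₀ ℕ))
    (hdeg : ∀ α ∈ B, degOf α = m)
    (hss : SStable (monIdeal K (B : Set (Fin N →₀ ℕ)))) :
    ∀ (W : ℕ) (η α : Fin N →₀ ℕ), w η = W → α ∈ B →
      ∃ η' α', α' ∈ B ∧ η' + α' = η + α ∧ ∀ i j, η' i ≠ 0 → α' j ≠ 0 → i ≤ j := by
  intro W
  induction W using Nat.strong_induction_on with
  | _ W IH =>
    intro η α hW hα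
    by_cases hsep : ∀ i j, η i ≠ 0 → α j ≠ 0 → i ≤ j
    · exact ⟨η, α, hα, rfl, hsep⟩
    · push_neg at hsep
      obtain ⟨i, j, hi, hj, hij⟩ := hsep
      have hji : j < i := hij
      have hij' : i ≠ j := ne_of_gt hji
      have h1 : 1 ≤ η i := Nat.one_le_iff_ne_zero.mpr hi
      have h2 : 1 ≤ α j := Nat.one_le_iff_ne_zero.mpr hj
      set α' := α - Finsupp.single j 1 + Finsupp.single i 1 with hα'def
      set η' := η - Finsupp.single i 1 + Finsupp.single j 1 with hη'def
      have hmem : MvPolynomial.monomial α' (1 : K) ∈ monIdeal K (B : Set (Fin N →₀ ℕ)) :=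
        hss.2 α (Ideal.subset_span ⟨α, by exact_mod_cast hα, rfl⟩) j i hji hj
      have hdα' : degOf α' = m := by
        have hle : Finsupp.single j 1 ≤ α := by
          rw [Finsupp.single_le_iff]; exact h2
        have hc : α - Finsupp.single j 1 + Finsupp.single j 1 = α :=
          tsub_add_cancel_of_le hle
        have hd1 : degOf (α - Finsupp.single j 1) + degOf (Finsupp.single j 1) = m := by
          rw [← degOf_add, hc, hdeg α hα]
        rw [hα'def, degOf_add]
        have hsj : degOf (Finsupp.single j 1) = 1 := by
          simp [degOf, Finsupp.sum_single_index]
        have hsi : degOf (Finsupp.single i 1) = 1 := by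
          simp [degOf, Finsupp.sum_single_index]
        omega
      obtain ⟨s, hsB, hsle⟩ := monomial_mem_monIdeal_iff.mp hmem
      have hα'B : α' ∈ B := by
        have heq : s = α' := eq_of_le_of_degOf_eq hsle (by rw [hdα', hdeg s hsB])
        rwa [← heq]
      have e1 : η - Finsupp.single i 1 + Finsupp.single i 1 = η :=
        tsub_add_cancel_of_le (by rw [Finsupp.single_le_iff]; exact h1)
      have e2 : α - Finsupp.single j 1 + Finsupp.single j 1 = α :=
        tsub_add_cancel_of_le (by rw [Finsupp.single_le_iff]; exact h2)
      have hsum : η' + α' = η + α := by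
        rw [hη'def, hα'def, add_add_add_comm,
          add_comm (Finsupp.single j 1) (Finsupp.single i 1), ← add_add_add_comm, e1, e2]
      have hwlt : w η' < w η := by
        have hkey : η' + Finsupp.single i 1 = η + Finsupp.single j 1 := by
          rw [hη'def, add_right_comm, e1]
        have hw := congrArg w hkey
        simp only [w_add, w_single] at hw
        have : (j : ℕ) < (i : ℕ) := hji
        omega
      obtain ⟨η'', α'', hB'', hsum'', hsep''⟩ := IH (w η') (hW ▸ hwlt) η' α' rfl hα'B
      exact ⟨η'', α'', hB'', by rw [hsum'', hsum], hsep''⟩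

lemma reduce (K : Type*) [Field K] {N m : ℕ} (B : Finset (Fin N →₀ ℕ))
    (hdeg : ∀ α ∈ B, degOf α = m)
    (hss : SStable (monIdeal K (B : Set (Fin N →₀ ℕ))))
    (f : (Fin N →₀ ℕ) → MvPolynomial (Fin N) K) (hms : IsMarkedSet B f) (t : ℕ) :
    ∀ (W : ℕ) (η α : Fin N →₀ ℕ), w η = W → α ∈ B → degOf η + degOf α = t →
      (∀ i j, η i ≠ 0 → α j ≠ 0 → i ≤ j) →
      MvPolynomial.monomial (η + α) (1 : K) ∈
        Submodule.span K { p : MvPolynomial (Fin N) K |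
          ∃ η' α' : Fin N →₀ ℕ, α' ∈ B ∧ degOf η' + degOf α' = t ∧
            (∀ i j, η' i ≠ 0 → α' j ≠ 0 → i ≤ j) ∧
            p = MvPolynomial.monomial η' (1 : K) * f α' } ⊔ compSpan K B := by
  intro W
  induction W using Nat.strong_induction_on with
  | _ W IH =>
    intro η α hW hα hdegt hsep
    have hsplit : MvPolynomial.monomial (η + α) (1 : K)
        = MvPolynomial.monomial η (1 : K) * f α
          + MvPolynomial.monomial η (1 : K) * (MvPolynomial.monomial α (1 : K) - f α) := by
      rw [mul_sub, MvPolynomial.monomial_mul, one_mul]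
      ring
    rw [hsplit]
    apply Submodule.add_mem
    · exact Submodule.mem_sup_left (Submodule.subset_span ⟨η, α, hα, hdegt, hsep, rfl⟩)
    · set q := MvPolynomial.monomial α (1 : K) - f α with hq
      have hexp : MvPolynomial.monomial η (1 : K) * q
          = ∑ β ∈ q.support, (q.coeff β) • MvPolynomial.monomial (η + β) (1 : K) := by
        conv_lhs => rw [q.as_sum]
        rw [Finset.mul_sum]
        refine Finset.sum_congr rfl fun β _ => ?_
        rw [MvPolynomial.monomial_mul, one_mul, MvPolynomial.smul_monomial,
          smul_eq_mul, mul_one]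
      rw [hexp]
      apply Submodule.sum_mem
      intro β hβ
      apply Submodule.smul_mem
      have hβc : q.coeff β ≠ 0 := MvPolynomial.mem_support_iff.mp hβ
      have hβα : β ≠ α := by
        intro h
        subst h
        apply hβc
        simp [hq, MvPolynomial.coeff_sub, MvPolynomial.coeff_monomial, (hms β hα).2.1]
      have hfc : (f α).coeff β ≠ 0 := by
        intro h
        apply hβc
        rw [hq, MvPolynomial.coeff_sub, h, MvPolynomial.coeff_monomial,
          if_neg (fun hh => hβα hh.symm), sub_zero]
      have hβJ := (hms α hα).2.2 β hβα hfc
      have hdegβ : degOf β = m := by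
        by_contra hne
        apply hfc
        apply ((hms α hα).1).coeff_eq_zero
        rw [← degOf_eq_degree, hdeg α hα]
        exact hne
      by_cases hJ : MvPolynomial.monomial (η + β) (1 : K) ∈ monIdeal K (B : Set (Fin N →₀ ℕ))
      · obtain ⟨s, hsB, hsle⟩ := monomial_mem_monIdeal_iff.mp hJ
        obtain ⟨η', α', hα'B, hsum, hsep'⟩ :=
          exists_sep K B hdeg hss (w ((η + β) - s)) ((η + β) - s) s rfl hsB
        have hηβ : η' + α' = η + β := by
          rw [hsum, tsub_add_cancel_of_le hsle]
        have hdη' : degOf η' = degOf η := by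
          have h1 := congrArg degOf hηβ
          rw [degOf_add, degOf_add, hdeg α' hα'B, hdegβ] at h1
          omega
        have hW1 := lemW hηβ.symm hsep' (le_add_right (le_refl η)) hdη'.symm
        have hne : η ≠ η' := by
          intro h
          have hβα' : α' = β := by
            have := hηβ
            rw [← h] at this
            exact add_left_cancel this
          exact hβJ (hβα' ▸ Ideal.subset_span ⟨α', by exact_mod_cast hα'B, rfl⟩)
        have hlt : w η' < w η := lt_of_le_of_ne hW1.1 fun h => hne (hW1.2 h.symm)
        have hmem := IH (w η') (hW ▸ hlt) η' α' rfl hα'B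
          (by rw [hdη', hdeg α' hα'B, ← hdeg α hα]; exact hdegt) hsep'
        rwa [hηβ] at hmem
      · exact Submodule.mem_sup_right (Submodule.subset_span ⟨η + β, hJ, rfl⟩)

end FtsAux


/-- If `F` is a `J`-marked basis for a strongly stable ideal `J` generated in degree `m` with
monomial basis `B`, then for all `t ≥ m` the set
`F^(t) = { x^η · f_α : f_α ∈ F, deg(x^η f_α) = t, max(x^η) ≤ min(x^α) }`
is a `K`-basis of `I_t`, where `I = (F)`: it is linearly independent and spans `I_t`. -/
theorem Fts_basis {K : Type*} [Field K] {n m : ℕ}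
    (B : Finset (Fin (n + 1) →₀ ℕ)) (hdeg : ∀ α ∈ B, degOf α = m)
    (hss : SStable (monIdeal K (B : Set (Fin (n + 1) →₀ ℕ))))
    (f : (Fin (n + 1) →₀ ℕ) → MvPolynomial (Fin (n + 1)) K) (hf : IsMarkedBasis B f) :
    ∀ t ≥ m,
      (Submodule.span K { p : MvPolynomial (Fin (n + 1)) K |
          ∃ η α : Fin (n + 1) →₀ ℕ, α ∈ B ∧ degOf η + degOf α = t ∧
            (∀ i j : Fin (n + 1), η i ≠ 0 → α j ≠ 0 → i ≤ j) ∧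
            p = monomial η (1 : K) * f α } =
        degPiece (Ideal.span (f '' (B : Set (Fin (n + 1) →₀ ℕ)))) t) ∧
      LinearIndependent K
        (fun p : { p : MvPolynomial (Fin (n + 1)) K |
          ∃ η α : Fin (n + 1) →₀ ℕ, α ∈ B ∧ degOf η + degOf α = t ∧
            (∀ i j : Fin (n + 1), η i ≠ 0 → α j ≠ 0 → i ≤ j) ∧
            p = monomial η (1 : K) * f α } => (p : MvPolynomial (Fin (n + 1)) K)) := by
  intro t ht
  classical
  have hms := hf.1
  set SS := { p : MvPolynomial (Fin (n + 1)) K |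
      ∃ η α : Fin (n + 1) →₀ ℕ, α ∈ B ∧ degOf η + degOf α = t ∧
        (∀ i j : Fin (n + 1), η i ≠ 0 → α j ≠ 0 → i ≤ j) ∧
        p = monomial η (1 : K) * f α } with hSS
  have hspanI : Submodule.span K SS ≤ Submodule.restrictScalars K
      ((Ideal.span (f '' (B : Set (Fin (n + 1) →₀ ℕ)))) :
        Submodule (MvPolynomial (Fin (n + 1)) K) (MvPolynomial (Fin (n + 1)) K)) := by
    rw [Submodule.span_le]
    rintro p ⟨η, α, hα, -, -, rfl⟩
    exact Ideal.mul_mem_left _ _ (Ideal.subset_span ⟨α, by exact_mod_cast hα, rfl⟩)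
  constructor
  · apply le_antisymm
    · rw [Submodule.span_le]
      rintro p ⟨η, α, hα, hdegs, hsep, rfl⟩
      refine Submodule.mem_inf.mpr ⟨?_, ?_⟩
      · exact Ideal.mul_mem_left _ _ (Ideal.subset_span ⟨α, by exact_mod_cast hα, rfl⟩)
      · have h1 : MvPolynomial.IsHomogeneous (monomial η (1 : K)) (degOf η) :=
          isHomogeneous_monomial _ rfl
        have h2 := (hms α hα).1
        have h3 := h1.mul h2
        rw [hdegs] at h3
        exact h3
    · intro g hg
      obtain ⟨hgI, hgh⟩ := Submodule.mem_inf.mp hg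
      have hghom : MvPolynomial.IsHomogeneous g t := hgh
      have hU : g ∈ Submodule.span K SS ⊔ compSpan K B := by
        rw [MvPolynomial.as_sum g]
        apply Submodule.sum_mem
        intro δ hδ
        have hcoeff : g.coeff δ ≠ 0 := MvPolynomial.mem_support_iff.mp hδ
        have hmon1 : (MvPolynomial.monomial δ) (g.coeff δ)
            = (g.coeff δ) • (MvPolynomial.monomial δ (1 : K)) := by
          rw [MvPolynomial.smul_monomial, smul_eq_mul, mul_one]
        rw [hmon1]
        apply Submodule.smul_mem
        by_cases hJ : MvPolynomial.monomial δ (1 : K) ∈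
            monIdeal K (B : Set (Fin (n + 1) →₀ ℕ))
        · obtain ⟨s, hsB, hsle⟩ := FtsAux.monomial_mem_monIdeal_iff.mp hJ
          obtain ⟨η', α', hα'B, hsum, hsep'⟩ :=
            FtsAux.exists_sep K B hdeg hss (FtsAux.w (δ - s)) (δ - s) s rfl hsB
          have hδeq : η' + α' = δ := by rw [hsum, tsub_add_cancel_of_le hsle]
          have hdegδ : degOf δ = t := by
            by_contra hne
            exact hcoeff (hghom.coeff_eq_zero
              (by rwa [← FtsAux.degOf_eq_degree]))
          have hdegs' : degOf η' + degOf α' = t := by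
            have := congrArg degOf hδeq
            rwa [FtsAux.degOf_add, hdegδ] at this
          have hmem := FtsAux.reduce K B hdeg hss f hms t
            (FtsAux.w η') η' α' rfl hα'B hdegs' hsep'
          rwa [hδeq] at hmem
        · exact Submodule.mem_sup_right (Submodule.subset_span ⟨δ, hJ, rfl⟩)
      obtain ⟨u, hu, r, hr, hur⟩ := Submodule.mem_sup.mp hU
      have hrval : r = g - u := by rw [← hur]; abel
      have hrI : r ∈ Submodule.restrictScalars K
          ((Ideal.span (f '' (B : Set (Fin (n + 1) →₀ ℕ)))) :
            Submodule (MvPolynomial (Fin (n + 1)) K) (MvPolynomial (Fin (n + 1)) K)) := by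
        rw [hrval]
        exact Submodule.sub_mem _ hgI (hspanI hu)
      have hrbot : r ∈ (⊥ : Submodule K (MvPolynomial (Fin (n + 1)) K)) := by
        rw [← hf.2.1]
        exact Submodule.mem_inf.mpr ⟨hrI, hr⟩
      have hr0 : r = 0 := (Submodule.mem_bot _).mp hrbot
      rw [← hur, hr0, add_zero]
      exact hu
  · rw [linearIndependent_iff]
    intro l hl
    by_contra hl0
    have hsupp : l.support.Nonempty := Finsupp.support_nonempty_iff.mpr hl0
    have hwit : ∀ p : SS, ∃ η α : Fin (n + 1) →₀ ℕ, α ∈ B ∧ degOf η + degOf α = t ∧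
        (∀ i j : Fin (n + 1), η i ≠ 0 → α j ≠ 0 → i ≤ j) ∧
        (p : MvPolynomial (Fin (n + 1)) K) = monomial η (1 : K) * f α := fun p => p.2
    choose ηf αf hB hd hs hp using hwit
    obtain ⟨p0, hp0, hmax⟩ := Finset.exists_max_image l.support
      (fun p => FtsAux.w (ηf p)) hsupp
    set δ0 := ηf p0 + αf p0 with hδ0
    have hcoeffsum : ∑ p ∈ l.support, l p * MvPolynomial.coeff δ0 (p : MvPolynomial (Fin (n + 1)) K) = 0 := by
      have h1 := congrArg (MvPolynomial.coeff δ0) hl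
      rw [Finsupp.linearCombination_apply, Finsupp.sum, MvPolynomial.coeff_sum,
        MvPolynomial.coeff_zero] at h1
      simpa only [MvPolynomial.coeff_smul, smul_eq_mul] using h1
    have hzero : ∀ p ∈ l.support, p ≠ p0 →
        l p * MvPolynomial.coeff δ0 (p : MvPolynomial (Fin (n + 1)) K) = 0 := by
      intro p hpmem hpne
      have hc : MvPolynomial.coeff δ0 (p : MvPolynomial (Fin (n + 1)) K) = 0 := by
        rw [hp p, MvPolynomial.coeff_monomial_mul']
        split_ifs with hle
        · rw [one_mul]
          by_contra hc
          set γ := δ0 - ηf p with hγdef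
          have hηγ : ηf p + γ = δ0 := add_tsub_cancel_of_le hle
          have hdeq : degOf (ηf p) = degOf (ηf p0) := by
            have e1 := hd p; have e2 := hd p0
            rw [hdeg _ (hB p)] at e1
            rw [hdeg _ (hB p0)] at e2
            omega
          have hW1 := FtsAux.lemW hδ0 (hs p0) hle hdeq
          by_cases hγα : γ = αf p
          · have hδp : δ0 = ηf p + αf p := by rw [← hγα]; exact hηγ.symm
            have hle0 : ηf p0 ≤ δ0 := by
              rw [hδ0]; exact le_add_right (le_refl _)
            have hW2 := FtsAux.lemW hδp (hs p) hle0 hdeq.symm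
            have heqw : FtsAux.w (ηf p) = FtsAux.w (ηf p0) :=
              le_antisymm hW2.1 hW1.1
            have heq : ηf p = ηf p0 := hW1.2 heqw
            have hαeq : αf p = αf p0 := by
              have h2 : ηf p0 + αf p = ηf p0 + αf p0 := by
                rw [← heq, ← hδp, hδ0, heq]
              exact add_left_cancel h2
            exact hpne (Subtype.ext (by rw [hp p, hp p0, heq, hαeq]))
          · have hnJ := (hms (αf p) (hB p)).2.2 γ hγα hc
            have hlt : FtsAux.w (ηf p0) < FtsAux.w (ηf p) := by
              rcases lt_or_eq_of_le hW1.1 with h | h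
              · exact h
              · exfalso
                have heq : ηf p = ηf p0 := hW1.2 h.symm
                have hγ0 : γ = αf p0 := by
                  have h2 : ηf p0 + γ = ηf p0 + αf p0 := by
                    rw [← heq, hηγ, hδ0, heq]
                  exact add_left_cancel h2
                exact hnJ (hγ0 ▸ Ideal.subset_span ⟨αf p0, by exact_mod_cast hB p0, rfl⟩)
            exact absurd (hmax p hpmem) (not_le.mpr hlt)
        · rfl
      rw [hc, mul_zero]
    have hsum1 := Finset.sum_eq_single_of_mem p0 hp0 hzero
    rw [hsum1] at hcoeffsum
    have hcoeff1 : MvPolynomial.coeff δ0 (p0 : MvPolynomial (Fin (n + 1)) K) = 1 := by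
      rw [hp p0, hδ0, MvPolynomial.coeff_monomial_mul, (hms (αf p0) (hB p0)).2.1, mul_one]
    rw [hcoeff1, mul_one] at hcoeffsum
    exact (Finsupp.mem_support_iff.mp hp0) hcoeffsum


end
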